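/- arXiv:0711.4218 — 3 statements merged into one kernel-verified Lean document; each statement's English description precedes it below -/
import Mathlib

section
/- Let $A_1,\dots,A_n$ be real numbers, $\lambda \in \mathbb{R}$ with $1+\lambda A_i > 0$ for every $i$, and suppose $\sum_{i=1}^n \frac{A_i}{1+\lambda A_i} = 0$. Let $w_i = \frac{1}{n(1+\lambda A_i)}$. Then for any weights $v_1,\dots,v_n \ge 0$ with $\sum_i v_i = 1$ and $\sum_i v_i A_i = 0$, one has $\prod_{i=1}^n (n v_i) \le \prod_{i=1}^n (n w_i)$. -/
open Finset

/-- The Lagrange-multiplier weights `w i = 1/(n(1+λ A i))` maximize the empirical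
likelihood `∏ i, n * v i` over the constraint set. -/
theorem stmt_3 (n : ℕ) (A : Fin n → ℝ) (lam : ℝ)
    (hpos : ∀ i, 0 < 1 + lam * A i)
    (heq : ∑ i, A i / (1 + lam * A i) = 0)
    (v : Fin n → ℝ) (hv : ∀ i, 0 ≤ v i) (hv1 : ∑ i, v i = 1)
    (hvA : ∑ i, v i * A i = 0) :
    ∏ i, ((n : ℝ) * v i) ≤ ∏ i, ((n : ℝ) * (1 / ((n : ℝ) * (1 + lam * A i)))) := by
  rcases Nat.eq_zero_or_pos n with hn | hn
  · subst hn; simp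
  have hn' : (0:ℝ) < n := by exact_mod_cast hn
  have hw : ∀ i, 0 < (n : ℝ) * (1 / ((n : ℝ) * (1 + lam * A i))) := fun i =>
    mul_pos hn' (one_div_pos.2 (mul_pos hn' (hpos i)))
  by_cases h0 : ∃ i, v i = 0
  · obtain ⟨i, hi⟩ := h0
    have : ∏ j, ((n : ℝ) * v j) = 0 := Finset.prod_eq_zero (mem_univ i) (by simp [hi])
    rw [this]
    exact le_of_lt (Finset.prod_pos fun i _ => hw i)
  · push_neg at h0
    have hvpos : ∀ i, 0 < v i := fun i => (hv i).lt_of_ne' (h0 i)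
    have hnv : ∀ i, 0 < (n : ℝ) * v i := fun i => mul_pos hn' (hvpos i)
    -- key log inequality
    have key : ∑ i, Real.log ((n : ℝ) * v i) ≤
        ∑ i, Real.log ((n : ℝ) * (1 / ((n : ℝ) * (1 + lam * A i)))) := by
      have h1 : ∀ i : Fin n, Real.log ((n : ℝ) * v i) -
          Real.log ((n : ℝ) * (1 / ((n : ℝ) * (1 + lam * A i)))) ≤
          v i * ((n : ℝ) * (1 + lam * A i)) - 1 := by
        intro i
        have hr : (0:ℝ) < ((n : ℝ) * v i) / ((n : ℝ) * (1 / ((n : ℝ) * (1 + lam * A i)))) :=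
          div_pos (hnv i) (hw i)
        have := Real.log_le_sub_one_of_pos hr
        rw [Real.log_div (hnv i).ne' (hw i).ne'] at this
        refine this.trans (le_of_eq ?_)
        field_simp
      calc ∑ i, Real.log ((n : ℝ) * v i)
          ≤ ∑ i, (Real.log ((n : ℝ) * (1 / ((n : ℝ) * (1 + lam * A i)))) +
              (v i * ((n : ℝ) * (1 + lam * A i)) - 1)) := by
            refine Finset.sum_le_sum fun i _ => ?_
            linarith [h1 i]
        _ = ∑ i, Real.log ((n : ℝ) * (1 / ((n : ℝ) * (1 + lam * A i)))) +
              ((n : ℝ) * (∑ i, v i) + (n : ℝ) * lam * (∑ i, v i * A i) - n) := by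
            rw [Finset.sum_add_distrib, Finset.sum_sub_distrib]
            simp only [Finset.sum_const, card_univ, Fintype.card_fin, nsmul_eq_mul, mul_one]
            congr 2
            rw [Finset.mul_sum, Finset.mul_sum, ← Finset.sum_add_distrib]
            exact Finset.sum_congr rfl fun i _ => by ring
        _ = ∑ i, Real.log ((n : ℝ) * (1 / ((n : ℝ) * (1 + lam * A i)))) := by
            rw [hv1, hvA]; ring
    have hlog : Real.log (∏ i, ((n : ℝ) * v i)) ≤
        Real.log (∏ i, ((n : ℝ) * (1 / ((n : ℝ) * (1 + lam * A i))))) := by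
      rw [Real.log_prod fun i _ => (hnv i).ne',
        Real.log_prod fun i _ => (hw i).ne']
      exact key
    have hp1 : 0 < ∏ i, ((n : ℝ) * v i) := Finset.prod_pos fun i _ => hnv i
    have hp2 : 0 < ∏ i, ((n : ℝ) * (1 / ((n : ℝ) * (1 + lam * A i)))) :=
      Finset.prod_pos fun i _ => hw i
    exact (Real.log_le_log_iff hp1 hp2).1 hlog
end

section
/- Let $A_1,\dots,A_n$ be real numbers, not all zero, and $\lambda \in \mathbb{R}$ with $1+\lambda A_i > 0$ for all $i$, satisfying $\sum_{i=1}^n \frac{A_i}{1+\lambda A_i} = 0$ and $\sum_{i=1}^n \frac{1}{1+\lambda A_i} = n$. Then $\sqrt{n}\,|\lambda| \ge \frac{\left| n^{-1}\sum_{i=1}^n A_i \right|}{n^{-1/2} \max_{1\le i \le n} A_i^2}$, provided $\max_i A_i^2 > 0$. -/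
open Finset

/-- Lower bound on the Lagrange multiplier used in the consistency proof
(Theorem 2.1(b)):
`√n |λ| ≥ |n⁻¹ ∑ A i| / (n^{-1/2} max_i (A i)²)`. -/
theorem stmt_5 (n : ℕ) (hn : 0 < n) (A : Fin n → ℝ) (lam : ℝ)
    (hA : ∃ i, A i ≠ 0)
    (hpos : ∀ i, 0 < 1 + lam * A i)
    (heq : ∑ i, A i / (1 + lam * A i) = 0)
    (hsum : ∑ i, 1 / (1 + lam * A i) = (n : ℝ))
    (hmax : 0 < (univ.sup' (univ_nonempty_iff.mpr (Fin.pos_iff_nonempty.mp hn))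
      fun i => (A i) ^ 2)) :
    Real.sqrt n * |lam| ≥
      |(n : ℝ)⁻¹ * ∑ i, A i| /
        ((Real.sqrt n)⁻¹ *
          (univ.sup' (univ_nonempty_iff.mpr (Fin.pos_iff_nonempty.mp hn))
            fun i => (A i) ^ 2)) := by
  set M := (univ.sup' (univ_nonempty_iff.mpr (Fin.pos_iff_nonempty.mp hn))
      fun i => (A i) ^ 2) with hM
  have hnR : (0:ℝ) < n := by exact_mod_cast hn
  have hsq : (0:ℝ) < Real.sqrt n := Real.sqrt_pos.mpr hnR
  -- key identity: ∑ A i = lam * ∑ (A i)^2 / (1 + lam * A i)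
  have hkey : ∑ i, A i = lam * ∑ i, (A i)^2 / (1 + lam * A i) := by
    have : ∑ i, A i = ∑ i, (A i / (1 + lam * A i) + lam * ((A i)^2 / (1 + lam * A i))) := by
      refine Finset.sum_congr rfl fun i _ => ?_
      have h := (hpos i).ne'
      rw [mul_div_assoc', ← add_div, eq_div_iff h]
      ring
    rw [this, Finset.sum_add_distrib, heq, zero_add, Finset.mul_sum]
  -- bound ∑ (A i)^2/(1+lam A i) ≤ M * n
  have hbound : ∑ i, (A i)^2 / (1 + lam * A i) ≤ M * n := by
    calc ∑ i, (A i)^2 / (1 + lam * A i) ≤ ∑ i, M * (1 / (1 + lam * A i)) := by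
          refine Finset.sum_le_sum fun i _ => ?_
          rw [mul_one_div]
          gcongr
          · exact (hpos i).le
          · exact le_sup' (fun i => (A i)^2) (mem_univ i)
        _ = M * n := by rw [← Finset.mul_sum, hsum]
  have habs : |∑ i, A i| ≤ |lam| * (M * n) := by
    rw [hkey, abs_mul]
    refine mul_le_mul_of_nonneg_left ?_ (abs_nonneg _)
    rw [abs_of_nonneg (Finset.sum_nonneg fun i _ =>
      div_nonneg (sq_nonneg _) (hpos i).le)]
    exact hbound
  -- conclude
  have hden : 0 < (Real.sqrt n)⁻¹ * M := by positivity
  rw [ge_iff_le, div_le_iff₀ hden]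
  have hsqsq : Real.sqrt n * Real.sqrt n = n := Real.mul_self_sqrt hnR.le
  have : Real.sqrt n * |lam| * ((Real.sqrt n)⁻¹ * M) = |lam| * M := by
    field_simp
  rw [this]
  rw [abs_mul, abs_of_nonneg (by positivity : (0:ℝ) ≤ (n:ℝ)⁻¹)]
  calc (n:ℝ)⁻¹ * |∑ i, A i| ≤ (n:ℝ)⁻¹ * (|lam| * (M * n)) := by
        exact mul_le_mul_of_nonneg_left habs (by positivity)
    _ = |lam| * M := by field_simp
end

section
/- Let $A_1,\dots,A_n$ be real numbers and $\lambda \in \mathbb{R}$ with $1+\lambda A_i > 0$ for all $i$ and $\sum_{i=1}^n \frac{A_i}{1+\lambda A_i} = 0$. Set $\ell = 2\sum_{i=1}^n \log(1+\lambda A_i)$. Then $\ell \ge \frac{n^{-1}\sum_{i=1}^n A_i^2}{2(n\lambda^2)^{-1} + 2\, n^{-1}\max_{1\le i\le n} A_i^2}$, provided $\lambda \neq 0$. -/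
open Finset Set

noncomputable def fAux : ℝ → ℝ := fun t => 2*Real.log (1+t) - 2*t/(1+t) - t^2/(2+2*t^2)

lemma fAux_deriv (x : ℝ) (hx : -1 < x) :
    HasDerivAt fAux (x * (2/(1+x)^2 - 4/(2+2*x^2)^2)) x := by
  have h1x : (1:ℝ) + x ≠ 0 := by linarith
  have hden : (2:ℝ) + 2*x^2 ≠ 0 := by positivity
  have h0 : HasDerivAt (fun t : ℝ => 1 + t) 1 x := (hasDerivAt_id x).const_add 1
  have hlog : HasDerivAt (fun t : ℝ => Real.log (1+t)) (1/(1+x)) x := by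
    simpa using h0.log h1x
  have hnum : HasDerivAt (fun t : ℝ => 2*t) 2 x := by
    simpa using (hasDerivAt_id x).const_mul 2
  have hfrac : HasDerivAt (fun t : ℝ => 2*t/(1+t))
      ((2*(1+x) - 2*x*1)/(1+x)^2) x := hnum.div h0 h1x
  have hsq : HasDerivAt (fun t : ℝ => t^2) (2*x) x := by
    simpa using hasDerivAt_pow 2 x
  have hden2 : HasDerivAt (fun t : ℝ => 2+2*t^2) (2*(2*x)) x :=
    (hsq.const_mul 2).const_add 2
  have hfrac2 : HasDerivAt (fun t : ℝ => t^2/(2+2*t^2))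
      ((2*x*(2+2*x^2) - x^2*(2*(2*x)))/(2+2*x^2)^2) x := hsq.div hden2 hden
  have := ((hlog.const_mul 2).sub hfrac).sub hfrac2
  refine HasDerivAt.congr_deriv this ?_
  field_simp
  ring

lemma bracket_nonneg (x : ℝ) (hx : -1 < x) :
    0 ≤ 2/(1+x)^2 - 4/(2+2*x^2)^2 := by
  have h1 : (0:ℝ) < (1+x)^2 := pow_pos (by linarith) 2
  have h2 : (0:ℝ) < (2+2*x^2)^2 := by positivity
  rw [sub_nonneg, div_le_div_iff₀ h2 h1]
  nlinarith [sq_nonneg (1-x), sq_nonneg x, sq_nonneg (x^2-1), sq_nonneg (x^2+x), sq_nonneg (1+x^2)]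

lemma fAux_nonneg (t : ℝ) (ht : -1 < t) : 0 ≤ fAux t := by
  have hf0 : fAux 0 = 0 := by simp [fAux]
  rcases le_or_gt 0 t with h | h
  · have hmono : MonotoneOn fAux (Ici 0) := by
      apply monotoneOn_of_deriv_nonneg (convex_Ici 0)
      · intro x hx
        exact ((fAux_deriv x (by simp at hx; linarith)).continuousAt).continuousWithinAt
      · intro x hx
        rw [interior_Ici] at hx
        exact ((fAux_deriv x (by linarith [mem_Ioi.mp hx])).differentiableAt).differentiableWithinAt
      · intro x hx
        rw [interior_Ici] at hx
        have hx' : 0 < x := mem_Ioi.mp hx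
        rw [(fAux_deriv x (by linarith)).deriv]
        exact mul_nonneg hx'.le (bracket_nonneg x (by linarith))
    have := hmono (self_mem_Ici) (mem_Ici.mpr h) h
    rwa [hf0] at this
  · have hanti : AntitoneOn fAux (Ioc (-1) 0) := by
      apply antitoneOn_of_deriv_nonpos (convex_Ioc (-1) 0)
      · intro x hx
        exact ((fAux_deriv x hx.1).continuousAt).continuousWithinAt
      · intro x hx
        rw [interior_Ioc] at hx
        exact ((fAux_deriv x hx.1).differentiableAt).differentiableWithinAt
      · intro x hx
        rw [interior_Ioc] at hx
        rw [(fAux_deriv x hx.1).deriv]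
        exact mul_nonpos_of_nonpos_of_nonneg hx.2.le (bracket_nonneg x hx.1)
    have := hanti (mem_Ioc.mpr ⟨ht, h.le⟩) (mem_Ioc.mpr ⟨by norm_num, le_refl 0⟩) h.le
    rwa [hf0] at this

lemma key_ineq (t : ℝ) (ht : -1 < t) :
    t^2/(2+2*t^2) ≤ 2*Real.log (1+t) - 2*t/(1+t) := by
  have := fAux_nonneg t ht
  unfold fAux at this
  linarith
open Finset

/-- Lower bound on the empirical log-likelihood ratio statistic used to prove
consistency against fixed alternatives (Theorem 2.1(b)). -/
theorem stmt_7 (n : ℕ) (hn : 0 < n) (A : Fin n → ℝ) (lam : ℝ) (hlam : lam ≠ 0)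
    (hpos : ∀ i, 0 < 1 + lam * A i)
    (heq : ∑ i, A i / (1 + lam * A i) = 0) :
    2 * ∑ i, Real.log (1 + lam * A i) ≥
      ((n : ℝ)⁻¹ * ∑ i, (A i) ^ 2) /
        (2 * ((n : ℝ) * lam ^ 2)⁻¹ +
          2 * (n : ℝ)⁻¹ *
            (univ.sup' (univ_nonempty_iff.mpr (Fin.pos_iff_nonempty.mp hn))
              fun i => (A i) ^ 2)) := by
  set M : ℝ := univ.sup' (univ_nonempty_iff.mpr (Fin.pos_iff_nonempty.mp hn))
      fun i => (A i) ^ 2 with hMdef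
  have hM : ∀ i, A i ^ 2 ≤ M := fun i => le_sup' (fun j => (A j)^2) (mem_univ i)
  have hM0 : 0 ≤ M := (sq_nonneg (A ⟨0, hn⟩)).trans (hM ⟨0, hn⟩)
  have hn' : (n : ℝ) ≠ 0 := Nat.cast_ne_zero.mpr hn.ne'
  have hC : (0:ℝ) < 2 + 2*lam^2*M := by positivity
  have hRHS : ((n : ℝ)⁻¹ * ∑ i, (A i) ^ 2) /
        (2 * ((n : ℝ) * lam ^ 2)⁻¹ + 2 * (n : ℝ)⁻¹ * M)
      = (lam^2 * ∑ i, (A i)^2) / (2 + 2*lam^2*M) := by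
    rw [div_eq_div_iff]
    · field_simp
    · have : 2 * ((n : ℝ) * lam ^ 2)⁻¹ + 2 * (n : ℝ)⁻¹ * M
          = (2 + 2*lam^2*M) / ((n:ℝ) * lam^2) := by
        field_simp
      rw [this]
      have hnl : (0:ℝ) < (n:ℝ) := Nat.cast_pos.mpr hn
      positivity
    · exact hC.ne'
  rw [hRHS]
  have hz : ∑ i, 2*(lam*A i)/(1+lam*A i) = 0 := by
    have h2 : ∑ i, 2*(lam*A i)/(1+lam*A i) = 2*lam*∑ i, A i/(1+lam*A i) := by
      rw [Finset.mul_sum]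
      exact Finset.sum_congr rfl fun i _ => by ring
    rw [h2, heq, mul_zero]
  have hstep1 : ∑ i, (lam*A i)^2/(2+2*(lam*A i)^2) ≤ 2 * ∑ i, Real.log (1 + lam * A i) := by
    have : 2 * ∑ i, Real.log (1 + lam * A i)
        = ∑ i, (2*Real.log (1+lam*A i) - 2*(lam*A i)/(1+lam*A i)) := by
      rw [Finset.sum_sub_distrib, hz, sub_zero, Finset.mul_sum]
    rw [this]
    apply Finset.sum_le_sum
    intro i _
    exact key_ineq (lam * A i) (by linarith [hpos i])
  have hstep2 : (lam^2 * ∑ i, (A i)^2) / (2 + 2*lam^2*M)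
      ≤ ∑ i, (lam*A i)^2/(2+2*(lam*A i)^2) := by
    have : (lam^2 * ∑ i, (A i)^2) / (2 + 2*lam^2*M)
        = ∑ i, (lam*A i)^2/(2+2*lam^2*M) := by
      rw [Finset.mul_sum, Finset.sum_div]
      exact Finset.sum_congr rfl fun i _ => by rw [mul_pow]
    rw [this]
    apply Finset.sum_le_sum
    intro i _
    apply div_le_div_of_nonneg_left (by positivity) (by positivity)
    have : (lam*A i)^2 = lam^2 * (A i)^2 := by rw [mul_pow]
    nlinarith [hM i, sq_nonneg lam]
  linarith
end
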